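/- For a tuple M = (M_1,…,M_{n−1}) of linear maps M_i : V_i → V_{i+1}, let h_M ∈ GL(V) be the linear automorphism of V = V_1 ⊕ … ⊕ V_n whose diagonal blocks are identities, whose (i+1,i)-block is −M_i for i = 1,…,n−1, and all of whose other blocks are 0. Then the assignment M ↦ (h_M(E_1),…,h_M(E_n)) is a bijection from the set ∏_{i=1}^{n−1} Hom_k(V_i,V_{i+1}) of all such tuples M onto the set of flags F_1 ⊆ F_2 ⊆ … ⊆ F_n = V of subspaces of V with dim F_i = α_1 + … + α_i for all i, F_i ⊆ E_{i+1} for i = 1,…,n−1, and F_i ∩ E'_i = 0 for i = 1,…,n. (This is the dual Zelevinsky map for the linearly oriented quiver of type A_n.) -/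

import Mathlib

open Module

section

variable {k : Type} [Field k] {n : ℕ} (W : Fin n → Type)
  [∀ i, AddCommGroup (W i)] [∀ i, Module k (W i)]

/-- The subspace `E_m = V_1 ⊕ … ⊕ V_m` of `V = V_1 ⊕ … ⊕ V_n`
(0-based: the coordinates `< m`). -/
def Efl (m : ℕ) : Submodule k (∀ j, W j) where
  carrier := {f | ∀ j : Fin n, m ≤ (j : ℕ) → f j = 0}
  add_mem' := by
    intro f g hf hg j hj
    simp [Pi.add_apply, hf j hj, hg j hj]
  zero_mem' := by intro j hj; rfl
  smul_mem' := by
    intro c f hf j hj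
    simp [Pi.smul_apply, hf j hj]

/-- The subspace `E'_m = V_{m+1} ⊕ … ⊕ V_n` of `V` (0-based: the coordinates `≥ m`). -/
def Tl (m : ℕ) : Submodule k (∀ j, W j) where
  carrier := {f | ∀ j : Fin n, (j : ℕ) < m → f j = 0}
  add_mem' := by
    intro f g hf hg j hj
    simp [Pi.add_apply, hf j hj, hg j hj]
  zero_mem' := by intro j hj; rfl
  smul_mem' := by
    intro c f hf j hj
    simp [Pi.smul_apply, hf j hj]

/-- The block sub-diagonal endomorphism of `V = V_1 ⊕ … ⊕ V_n` determined by a tuple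
`M = (M_1,…,M_{n−1})` of maps `M_i : V_i → V_{i+1}`: its `(i+1,i)`-blocks are the `M_i`
and all other blocks are `0`. -/
def Dmat (M : ∀ i j : Fin n, (i : ℕ) + 1 = (j : ℕ) → (W i →ₗ[k] W j)) :
    (∀ j, W j) →ₗ[k] (∀ j, W j) :=
  LinearMap.pi (fun j : Fin n =>
    ∑ i : Fin n,
      if h : (i : ℕ) + 1 = (j : ℕ) then (M i j h).comp (LinearMap.proj i) else 0)

/-- The automorphism `h_M = id − D_M` of `V = V_1 ⊕ … ⊕ V_n`: its diagonal blocks are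
identities, its `(i+1,i)`-block is `−M_i`, and all other blocks are `0`. -/
def hMat (M : ∀ i j : Fin n, (i : ℕ) + 1 = (j : ℕ) → (W i →ₗ[k] W j)) :
    (∀ j, W j) →ₗ[k] (∀ j, W j) :=
  LinearMap.id - Dmat W M

end
section
variable {k : Type} [Field k] {n : ℕ} (W : Fin n → Type)
  [∀ i, AddCommGroup (W i)] [∀ i, Module k (W i)]

lemma mem_Efl {m : ℕ} {f : ∀ j, W j} :
    f ∈ Efl (k := k) W m ↔ ∀ j : Fin n, m ≤ (j : ℕ) → f j = 0 := Iff.rfl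

lemma mem_Tl {m : ℕ} {f : ∀ j, W j} :
    f ∈ Tl (k := k) W m ↔ ∀ j : Fin n, (j : ℕ) < m → f j = 0 := Iff.rfl

lemma Efl_mono {m m' : ℕ} (h : m ≤ m') : Efl (k := k) W m ≤ Efl (k := k) W m' := by
  intro f hf j hj
  exact hf j (le_trans h hj)

lemma Efl_top {m : ℕ} (h : n ≤ m) : Efl (k := k) W m = ⊤ := by
  ext f
  simp only [Submodule.mem_top, iff_true, mem_Efl]
  intro j hj
  exact absurd (lt_of_lt_of_le j.isLt h) (not_lt.2 hj)

variable (M : ∀ i j : Fin n, (i : ℕ) + 1 = (j : ℕ) → (W i →ₗ[k] W j))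

lemma Dmat_apply_succ (i j : Fin n) (h : (i : ℕ) + 1 = (j : ℕ)) (f : ∀ j, W j) :
    Dmat W M f j = M i j h (f i) := by
  show (∑ i' : Fin n, if h' : (i' : ℕ) + 1 = (j : ℕ) then (M i' j h').comp (LinearMap.proj i') else 0) f = _
  rw [LinearMap.sum_apply]
  rw [Finset.sum_eq_single i]
  · rw [dif_pos h]; rfl
  · intro i' _ hne
    rcases eq_or_ne ((i' : ℕ) + 1) (j : ℕ) with h' | h'
    · exact absurd (Fin.ext (by omega)) hne
    · rw [dif_neg h']; rfl
  · intro h'; exact absurd (Finset.mem_univ i) h'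

lemma Dmat_apply_zero (j : Fin n) (h : (j : ℕ) = 0) (f : ∀ j, W j) :
    Dmat W M f j = 0 := by
  show (∑ i' : Fin n, if h' : (i' : ℕ) + 1 = (j : ℕ) then (M i' j h').comp (LinearMap.proj i') else 0) f = _
  rw [LinearMap.sum_apply]
  refine Finset.sum_eq_zero ?_
  intro i' _
  rw [dif_neg (by omega)]; rfl

lemma hMat_apply (f : ∀ j, W j) (j : Fin n) :
    hMat W M f j = f j - Dmat W M f j := rfl

/-- Triangularity: if `h_M f` vanishes below `m`, so does `f`. -/
lemma hMat_triang {m : ℕ} {f : ∀ j, W j}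
    (hf : ∀ j : Fin n, (j : ℕ) < m → hMat W M f j = 0) :
    ∀ j : Fin n, (j : ℕ) < m → f j = 0 := by
  suffices H : ∀ t : ℕ, ∀ (ht : t < n), t < m → f ⟨t, ht⟩ = 0 by
    intro j hj; exact H j j.isLt hj
  intro t
  induction t using Nat.strong_induction_on with
  | _ t ih =>
    intro ht htm
    have h0 := hf ⟨t, ht⟩ htm
    rw [hMat_apply, sub_eq_zero] at h0
    rw [h0]
    match t, ht, htm, ih with
    | 0, ht, htm, ih => exact Dmat_apply_zero W M ⟨0, ht⟩ rfl f
    | (s+1), ht, htm, ih =>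
      rw [Dmat_apply_succ W M ⟨s, by omega⟩ ⟨s+1, ht⟩ rfl f,
        ih s (by omega) (by omega) (by omega), map_zero]

lemma Dmat_pow (m : ℕ) (f : ∀ j, W j) : ∀ (j : Fin n), (j : ℕ) < m →
    ((Dmat W M) ^ m) f j = 0 := by
  induction m with
  | zero => omega
  | succ s ih =>
    intro j hj
    rw [pow_succ']
    show Dmat W M (((Dmat W M) ^ s) f) j = 0
    match j, hj with
    | ⟨0, h0⟩, hj => exact Dmat_apply_zero W M ⟨0, h0⟩ rfl _
    | ⟨t+1, h0⟩, hj =>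
      have hj' : t + 1 < s + 1 := hj
      rw [Dmat_apply_succ W M ⟨t, by omega⟩ ⟨t+1, h0⟩ rfl _, ih ⟨t, by omega⟩ (by
        show t < s; omega), map_zero]

lemma Dmat_nilpotent : IsNilpotent (Dmat W M : Module.End k (∀ j, W j)) :=
  ⟨n, LinearMap.ext fun f => funext fun j => Dmat_pow W M n f j j.isLt⟩

lemma hMat_bijective : Function.Bijective (hMat W M) := by
  have h := (Dmat_nilpotent W M).isUnit_one_sub
  rw [Module.End.isUnit_iff] at h
  exact h

/-- `h_M` maps `E_m` into `E_{m+1}`. -/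
lemma hMat_mem_Efl {m : ℕ} {f : ∀ j, W j} (hf : f ∈ Efl (k := k) W m) :
    hMat W M f ∈ Efl (k := k) W (m + 1) := by
  intro j hj
  rw [hMat_apply, hf j (by omega)]
  match j, hj with
  | ⟨0, h0⟩, hj => rw [Dmat_apply_zero W M ⟨0, h0⟩ rfl f, sub_zero]
  | ⟨t+1, h0⟩, hj =>
    have hj' : m + 1 ≤ t + 1 := hj
    rw [Dmat_apply_succ W M ⟨t, by omega⟩ ⟨t+1, h0⟩ rfl f,
      hf ⟨t, by omega⟩ (by show m ≤ t; omega), map_zero, sub_zero]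

/-- The linear equivalence between `E_m` and the product of the first coordinates. -/
noncomputable def eflEquiv (m : ℕ) :
    (Efl (k := k) W m) ≃ₗ[k] ((j : {j : Fin n // (j : ℕ) < m}) → W j) where
  toFun f j := f.1 j
  map_add' f g := rfl
  map_smul' c f := rfl
  invFun g := ⟨fun j => if h : (j : ℕ) < m then g ⟨j, h⟩ else 0, by
    intro j hj; exact dif_neg (by omega)⟩
  left_inv f := Subtype.ext (funext fun j => by
    by_cases h : (j : ℕ) < m
    · exact dif_pos h
    · exact (dif_neg h).trans (f.2 j (by omega)).symm)
  right_inv g := funext fun j => dif_pos j.2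

lemma finrank_Efl [∀ i, FiniteDimensional k (W i)] (m : ℕ) :
    finrank k (Efl (k := k) W m) =
      ∑ j ∈ Finset.univ.filter (fun j : Fin n => (j : ℕ) < m), finrank k (W j) := by
  rw [(eflEquiv W m).finrank_eq, Module.finrank_pi_fintype]
  exact (Finset.sum_subtype (Finset.univ.filter (fun j : Fin n => (j : ℕ) < m))
    (fun j => by simp) (fun j => finrank k (W j))).symm

lemma single_mem_Efl (i : Fin n) (v : W i) :
    Pi.single i v ∈ Efl (k := k) W ((i : ℕ) + 1) := by
  intro j hj
  exact Pi.single_eq_of_ne (by intro hji; rw [hji] at hj; omega) v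

lemma hMat_single (i : Fin n) (v : W i) (j : Fin n) :
    hMat W M (Pi.single i v) j =
      Pi.single i v j - (if h : (i : ℕ) + 1 = (j : ℕ) then M i j h v else 0) := by
  rw [hMat_apply]
  congr 1
  match j with
  | ⟨0, h0⟩ =>
    rw [Dmat_apply_zero W M ⟨0, h0⟩ rfl, dif_neg (by show (i : ℕ) + 1 ≠ 0; omega)]
  | ⟨t+1, h0⟩ =>
    rw [Dmat_apply_succ W M ⟨t, by omega⟩ ⟨t+1, h0⟩ rfl]
    by_cases hit : i = ⟨t, by omega⟩
    · subst hit
      rw [Pi.single_eq_same, dif_pos rfl]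
    · rw [Pi.single_eq_of_ne (Ne.symm hit) v, map_zero, dif_neg (by
        intro hc
        have hc' : (i : ℕ) + 1 = t + 1 := hc
        exact hit (Fin.ext (by show (i : ℕ) = t; omega)))]

variable [∀ i, FiniteDimensional k (W i)]

lemma finrank_map_hMat (p : Submodule k (∀ j, W j)) :
    finrank k (Submodule.map (hMat W M) p) = finrank k p := by
  have : Submodule.map (hMat W M) p =
      Submodule.map (LinearEquiv.ofBijective (hMat W M) (hMat_bijective W M) :
        (∀ j, W j) →ₗ[k] (∀ j, W j)) p := rfl
  rw [this, LinearEquiv.finrank_map_eq]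

lemma filter_le_eq (i : Fin n) :
    Finset.univ.filter (· ≤ i) =
      Finset.univ.filter (fun j : Fin n => (j : ℕ) < (i : ℕ) + 1) := by
  apply Finset.filter_congr
  intro j _
  rw [Fin.le_def]
  omega

lemma finrank_map_Efl (i : Fin n) :
    finrank k (Submodule.map (hMat W M) (Efl (k := k) W ((i : ℕ) + 1))) =
      ∑ j ∈ Finset.univ.filter (· ≤ i), finrank k (W j) := by
  rw [finrank_map_hMat, finrank_Efl, filter_le_eq]

lemma hMat_mapsTo (hn : 1 ≤ n) :
    (fun i : Fin n => Submodule.map (hMat W M) (Efl (k := k) W ((i : ℕ) + 1))) ∈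
      {F : Fin n → Submodule k (∀ j, W j) |
        (∀ i j : Fin n, i ≤ j → F i ≤ F j) ∧
        F ⟨n - 1, Nat.sub_lt hn Nat.one_pos⟩ = ⊤ ∧
        (∀ i : Fin n,
          finrank k (F i) = ∑ j ∈ Finset.univ.filter (· ≤ i), finrank k (W j)) ∧
        (∀ (i : Fin n), (i : ℕ) + 1 < n → F i ≤ Efl W ((i : ℕ) + 2)) ∧
        (∀ i : Fin n, F i ⊓ Tl W ((i : ℕ) + 1) = ⊥)} := by
  refine ⟨?_, ?_, ?_, ?_, ?_⟩
  · intro i j hij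
    exact Submodule.map_mono (Efl_mono W (by have := Fin.le_def.mp hij; omega))
  · have hv : ((⟨n - 1, Nat.sub_lt hn Nat.one_pos⟩ : Fin n) : ℕ) + 1 = n := by simp; omega
    show Submodule.map (hMat W M) (Efl (k := k) W (((⟨n - 1, Nat.sub_lt hn Nat.one_pos⟩ : Fin n) : ℕ) + 1)) = ⊤
    rw [hv, Efl_top W le_rfl, Submodule.map_top,
      LinearMap.range_eq_top.mpr (hMat_bijective W M).surjective]
  · intro i
    exact finrank_map_Efl W M i
  · rintro i - g hg
    obtain ⟨f, hf, rfl⟩ := hg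
    exact hMat_mem_Efl W M hf
  · intro i
    rw [Submodule.eq_bot_iff]
    rintro x ⟨⟨f, hf, rfl⟩, h2⟩
    have hf0 : f = 0 := by
      funext j
      by_cases hj : (j : ℕ) < (i : ℕ) + 1
      · exact hMat_triang W M h2 j hj
      · exact hf j (by omega)
    rw [hf0, map_zero]

omit [∀ i, FiniteDimensional k (W i)] in
lemma hMat_injOn (M' : ∀ i j : Fin n, (i : ℕ) + 1 = (j : ℕ) → (W i →ₗ[k] W j))
    (h : ∀ i : Fin n, Submodule.map (hMat W M) (Efl (k := k) W ((i : ℕ) + 1)) =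
      Submodule.map (hMat W M') (Efl (k := k) W ((i : ℕ) + 1))) :
    M = M' := by
  funext i j hij
  ext v
  set g := hMat W M (Pi.single i v) with hg
  have hgmem : g ∈ Submodule.map (hMat W M') (Efl (k := k) W ((i : ℕ) + 1)) := by
    rw [← h i]
    exact ⟨Pi.single i v, single_mem_Efl W i v, rfl⟩
  obtain ⟨f, hf, hgf⟩ := hgmem
  -- g vanishes below i
  have hgz : ∀ j' : Fin n, (j' : ℕ) < (i : ℕ) → g j' = 0 := by
    intro j' hj'
    rw [hg, hMat_single, Pi.single_eq_of_ne (by intro hc; rw [hc] at hj'; omega) v,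
      dif_neg (by omega), sub_zero]
  -- hence f vanishes below i
  have hfz : ∀ j' : Fin n, (j' : ℕ) < (i : ℕ) → f j' = 0 := by
    apply hMat_triang W M'
    intro j' hj'
    rw [hgf]
    exact hgz j' hj'
  -- f i = v
  have hfi : f i = v := by
    have h1 : g i = v := by
      rw [hg, hMat_single, Pi.single_eq_same, dif_neg (by omega), sub_zero]
    have h2 : g i = f i - Dmat W M' f i := by rw [← hgf]; rfl
    have h3 : Dmat W M' f i = 0 := by
      match i, hfz with
      | ⟨0, h0⟩, hfz => exact Dmat_apply_zero W M' ⟨0, h0⟩ rfl f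
      | ⟨t+1, h0⟩, hfz =>
        rw [Dmat_apply_succ W M' ⟨t, by omega⟩ ⟨t+1, h0⟩ rfl f,
          hfz ⟨t, by omega⟩ (by show t < t + 1; omega), map_zero]
    rw [h2, h3, sub_zero] at h1
    exact h1
  -- compare coordinate j
  have hgj1 : g j = -(M i j hij v) := by
    rw [hg, hMat_single, Pi.single_eq_of_ne (by intro hc; rw [hc] at hij; omega) v,
      dif_pos hij, zero_sub]
  have hgj2 : g j = -(M' i j hij v) := by
    rw [← hgf, hMat_apply, hf j (by omega), Dmat_apply_succ W M' i j hij f, hfi, zero_sub]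
  rw [hgj1] at hgj2
  exact neg_injective hgj2

/-- Truncation to the coordinates `< m`. -/
def Pproj (m : ℕ) : (∀ j, W j) →ₗ[k] (∀ j, W j) :=
  LinearMap.pi (fun j : Fin n => if (j : ℕ) < m then LinearMap.proj j else 0)

omit [∀ i, FiniteDimensional k (W i)] in
lemma Pproj_apply (m : ℕ) (f : ∀ j, W j) (j : Fin n) :
    Pproj (k := k) W m f j = if (j : ℕ) < m then f j else 0 := by
  show (if (j : ℕ) < m then (LinearMap.proj j : (∀ j, W j) →ₗ[k] W j) else 0) f = _
  split_ifs <;> rfl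

omit [∀ i, FiniteDimensional k (W i)] in
lemma Pproj_mem_Efl (m : ℕ) (f : ∀ j, W j) : Pproj (k := k) W m f ∈ Efl (k := k) W m := by
  intro j hj
  rw [Pproj_apply, if_neg (by omega)]

lemma hMat_surjOn (hn : 1 ≤ n) (F : Fin n → Submodule k (∀ j, W j))
    (h1 : ∀ i j : Fin n, i ≤ j → F i ≤ F j)
    (h3 : ∀ i : Fin n,
      finrank k (F i) = ∑ j ∈ Finset.univ.filter (· ≤ i), finrank k (W j))
    (h4 : ∀ (i : Fin n), (i : ℕ) + 1 < n → F i ≤ Efl W ((i : ℕ) + 2))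
    (h5 : ∀ i : Fin n, F i ⊓ Tl W ((i : ℕ) + 1) = ⊥) :
    ∃ M : ∀ i j : Fin n, (i : ℕ) + 1 = (j : ℕ) → (W i →ₗ[k] W j),
      ∀ i : Fin n, Submodule.map (hMat W M) (Efl (k := k) W ((i : ℕ) + 1)) = F i := by
  classical
  -- the projection from `F i` to `E_{i+1}` is bijective
  set pm : ∀ i : Fin n, ↥(F i) →ₗ[k] ↥(Efl (k := k) W ((i : ℕ) + 1)) := fun i =>
    LinearMap.codRestrict _ ((Pproj (k := k) W ((i : ℕ) + 1)).domRestrict (F i))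
      (fun x => Pproj_mem_Efl W _ x.val) with hpm
  have pm_apply : ∀ (i : Fin n) (x : ↥(F i)) (j : Fin n),
      (pm i x).val j = if (j : ℕ) < (i : ℕ) + 1 then x.val j else 0 := by
    intro i x j
    rw [hpm]
    exact Pproj_apply W _ x.val j
  have pm_inj : ∀ i : Fin n, Function.Injective (pm i) := by
    intro i
    refine (injective_iff_map_eq_zero (pm i)).mpr fun x hx => ?_
    have hxv : x.val ∈ F i ⊓ Tl W ((i : ℕ) + 1) := by
      refine ⟨x.2, ?_⟩
      intro j hj
      have h0 := congrArg (fun y : ↥(Efl (k := k) W ((i : ℕ) + 1)) => y.val j) hx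
      rw [pm_apply i x j, if_pos hj] at h0
      exact h0
    rw [h5 i, Submodule.mem_bot] at hxv
    exact Subtype.ext hxv
  have pm_finrank : ∀ i : Fin n, finrank k (F i) = finrank k (Efl (k := k) W ((i : ℕ) + 1)) := by
    intro i
    rw [h3 i, finrank_Efl, filter_le_eq]
  have pm_bij : ∀ i : Fin n, Function.Bijective (pm i) := by
    intro i
    refine ⟨fun x y hxy => pm_inj i (by rw [hxy]), ?_⟩
    rw [← LinearMap.range_eq_top]
    apply Submodule.eq_top_of_finrank_eq
    rw [LinearMap.finrank_range_of_inj (fun x y hxy => pm_inj i (by rw [hxy])),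
      pm_finrank i]
  set q : ∀ i : Fin n, ↥(Efl (k := k) W ((i : ℕ) + 1)) ≃ₗ[k] ↥(F i) := fun i =>
    (LinearEquiv.ofBijective (pm i) (pm_bij i)).symm with hq
  have hqval : ∀ (i : Fin n) (x : ↥(Efl (k := k) W ((i : ℕ) + 1))),
      pm i (q i x) = x := fun i x =>
    (LinearEquiv.ofBijective (pm i) (pm_bij i)).apply_symm_apply x
  set sing : ∀ i : Fin n, W i →ₗ[k] ↥(Efl (k := k) W ((i : ℕ) + 1)) := fun i =>
    LinearMap.codRestrict _ (LinearMap.single k W i) (fun v => single_mem_Efl W i v)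
    with hsing
  set M : ∀ i j : Fin n, (i : ℕ) + 1 = (j : ℕ) → (W i →ₗ[k] W j) := fun i j _ =>
    -((LinearMap.proj j) ∘ₗ (F i).subtype ∘ₗ (q i).toLinearMap ∘ₗ (sing i)) with hM
  refine ⟨M, ?_⟩
  -- the element of `F i` over `Pi.single i v`
  have key : ∀ (i : Fin n) (v : W i),
      hMat W M (Pi.single i v) = ((q i) (sing i v)).val := by
    intro i v
    set g : ↥(F i) := (q i) (sing i v) with hgdef
    have ga : ∀ j' : Fin n, (j' : ℕ) < (i : ℕ) + 1 → g.val j' = Pi.single i v j' := by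
      intro j' hj'
      have := congrArg (fun y : ↥(Efl (k := k) W ((i : ℕ) + 1)) => y.val j') (hqval i (sing i v))
      rw [pm_apply, if_pos hj'] at this
      exact this
    have gb : ∀ j' : Fin n, (i : ℕ) + 2 ≤ (j' : ℕ) → g.val j' = 0 := by
      intro j' hj'
      by_cases hin : (i : ℕ) + 1 < n
      · exact h4 i hin g.2 j' hj'
      · exfalso
        have := j'.isLt
        omega
    have gc : ∀ (j : Fin n) (hij : (i : ℕ) + 1 = (j : ℕ)),
        g.val j = -(M i j hij v) := by
      intro j hij
      rw [hM]
      simp only [LinearMap.neg_apply, LinearMap.comp_apply, neg_neg]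
      rfl
    funext j'
    rw [hMat_single]
    rcases lt_trichotomy ((j' : ℕ)) ((i : ℕ) + 1) with hj' | hj' | hj'
    · rw [dif_neg (by omega), sub_zero, ga j' hj']
    · rw [dif_pos hj'.symm, Pi.single_eq_of_ne (by intro hc; rw [hc] at hj'; omega) v,
        zero_sub, gc j' hj'.symm]
    · rw [dif_neg (by omega), sub_zero,
        Pi.single_eq_of_ne (by intro hc; rw [hc] at hj'; omega) v, gb j' (by omega)]
  -- main claim, by induction
  have main : ∀ t : ℕ, ∀ (ht : t < n),
      Submodule.map (hMat W M) (Efl (k := k) W (t + 1)) ≤ F ⟨t, ht⟩ := by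
    intro t
    induction t using Nat.strong_induction_on with
    | _ t ih =>
      intro ht
      rintro x ⟨f, hf, rfl⟩
      set i : Fin n := ⟨t, ht⟩ with hi
      set f' : ∀ j, W j := f - Pi.single i (f i) with hf'
      have hf'mem : f' ∈ Efl (k := k) W t := by
        intro j hj
        rw [hf']
        by_cases hji : j = i
        · subst hji; simp
        · have : (j : ℕ) ≠ t := by
            intro hc; exact hji (Fin.ext (by rw [hi]; exact hc))
          rw [Pi.sub_apply, Pi.single_eq_of_ne hji (f i), sub_zero]
          exact hf j (by omega)
      have hsplit : f = f' + Pi.single i (f i) := by rw [hf']; abel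
      rw [hsplit, map_add]
      refine Submodule.add_mem _ ?_ ?_
      · rcases Nat.eq_zero_or_pos t with ht0 | htpos
        · have hz : f' = 0 := funext fun j => hf'mem j (by omega)
          rw [hz, map_zero]
          exact Submodule.zero_mem _
        · refine h1 ⟨t - 1, by omega⟩ i (by rw [Fin.le_def]; show t - 1 ≤ t; omega) ?_
          refine ih (t - 1) (by omega) (by omega) ⟨f', ?_, rfl⟩
          have htt : t - 1 + 1 = t := by omega
          rw [htt]
          exact hf'mem
      · rw [key i (f i)]
        exact ((q i) (sing i (f i))).2
  intro i
  apply Submodule.eq_of_le_of_finrank_eq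
  · have := main (i : ℕ) i.isLt
    simpa using this
  · rw [finrank_map_Efl, h3 i]

end

/-- The dual Zelevinsky map: `M ↦ (h_M(E_1),…,h_M(E_n))` is a bijection from the set of
all tuples `M = (M_1,…,M_{n−1})` of linear maps `M_i : V_i → V_{i+1}` onto the set of
flags `F_1 ⊆ … ⊆ F_n = V` with `dim F_i = α_1 + … + α_i`, `F_i ⊆ E_{i+1}` for
`i = 1,…,n−1`, and `F_i ∩ E'_i = 0` for `i = 1,…,n`. (Indexed 0-based.) -/
theorem statement17 {k : Type} [Field k] {n : ℕ} (hn : 1 ≤ n) (W : Fin n → Type)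
    [∀ i, AddCommGroup (W i)] [∀ i, Module k (W i)] [∀ i, FiniteDimensional k (W i)] :
    Set.BijOn
      (fun M : ∀ i j : Fin n, (i : ℕ) + 1 = (j : ℕ) → (W i →ₗ[k] W j) =>
        fun i : Fin n => Submodule.map (hMat W M) (Efl W ((i : ℕ) + 1)))
      Set.univ
      {F : Fin n → Submodule k (∀ j, W j) |
        (∀ i j : Fin n, i ≤ j → F i ≤ F j) ∧
        F ⟨n - 1, by omega⟩ = ⊤ ∧
        (∀ i : Fin n,
          finrank k (F i) = ∑ j ∈ Finset.univ.filter (· ≤ i), finrank k (W j)) ∧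
        (∀ (i : Fin n), (i : ℕ) + 1 < n → F i ≤ Efl W ((i : ℕ) + 2)) ∧
        (∀ i : Fin n, F i ⊓ Tl W ((i : ℕ) + 1) = ⊥)} := by
  refine ⟨?_, ?_, ?_⟩
  · intro M _
    exact hMat_mapsTo W M hn
  · intro M _ M' _ h
    exact hMat_injOn W M M' (fun i => congrFun h i)
  · intro F hF
    obtain ⟨h1, h2, h3, h4, h5⟩ := hF
    obtain ⟨M, hM⟩ := hMat_surjOn W hn F h1 h3 h4 h5
    exact ⟨M, Set.mem_univ M, funext hM⟩
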